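/- Let z = (ρ, v, m) ∈ ℝ × ℝ² × ℝ² satisfy |v|² + ρ v₂ = 0, m · v⊥ = 0, and m · (v + (0,ρ)) = 0. Then there exists ξ ∈ ℝ² \ {0} such that m · ξ = 0, v · ξ = 0, and (v + (0,ρ)) · ξ⊥ = 0. -/
import Mathlib


open MeasureTheory

noncomputable section

/-- Euclidean dot product on ℝ². -/
def dot (a b : ℝ × ℝ) : ℝ := a.1 * b.1 + a.2 * b.2

/-- Rotation by 90°: (a,b)⊥ = (−b, a). -/
def perp (a : ℝ × ℝ) : ℝ × ℝ := (-a.2, a.1)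

/-- Euclidean norm on ℝ². -/
def nrm (a : ℝ × ℝ) : ℝ := Real.sqrt (a.1 ^ 2 + a.2 ^ 2)

/-- State space ℝ × ℝ² × ℝ² of (ρ, v, m). -/
abbrev Pt := ℝ × (ℝ × ℝ) × (ℝ × ℝ)

/-- The wave cone Λ of stationary IPM. -/
def Lam : Set Pt :=
  {z | dot z.2.1 z.2.1 + z.1 * z.2.1.2 = 0 ∧ dot z.2.2 (perp z.2.1) = 0 ∧
       dot z.2.2 (z.2.1 + (0, z.1)) = 0}

/-- The constitutive set K. -/
def Kset : Set Pt := {z | |z.1| = 1 ∧ z.2.2 = z.1 • z.2.1}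

def G2 (z : Pt) : ℝ := dot z.2.2 (perp z.2.1)

def G3 (z : Pt) : ℝ :=
  -dot (z.2.1 - z.2.2) (z.2.1 + (0, 1 + z.1)) + dot (z.2.1 - z.2.2) (z.2.1 - z.2.2) / 2

def G4 (z : Pt) : ℝ :=
  -dot (z.2.1 + z.2.2) (z.2.1 - (0, 1 - z.1)) + dot (z.2.1 + z.2.2) (z.2.1 + z.2.2) / 2

theorem stmt1 (ρ : ℝ) (v m : ℝ × ℝ)
    (h1 : dot v v + ρ * v.2 = 0) (h2 : dot m (perp v) = 0) (h3 : dot m (v + (0, ρ)) = 0) :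
    ∃ ξ : ℝ × ℝ, ξ ≠ 0 ∧ dot m ξ = 0 ∧ dot v ξ = 0 ∧ dot (v + (0, ρ)) (perp ξ) = 0 := by
  by_cases hw : v + (0, ρ) = 0
  · have hv1 : v.1 = 0 := by
      have := congrArg Prod.fst hw; simpa using this
    have hv2 : v.2 = -ρ := by
      have := congrArg Prod.snd hw
      simp [Prod.snd_add] at this; linarith
    by_cases hρ : ρ = 0
    · by_cases hm : m = 0
      · exact ⟨(1, 0), by simp [Prod.ext_iff], by simp [dot, hm],
          by simp [dot, hv1], by simp [dot, perp, hw]⟩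
      · refine ⟨perp m, ?_, ?_, ?_, ?_⟩
        · intro h
          rw [Prod.ext_iff] at h
          simp only [perp, Prod.fst_zero, Prod.snd_zero, neg_eq_zero] at h
          exact hm (Prod.ext h.2 h.1)
        · simp [dot, perp]; ring
        · simp [dot, perp, hv1, hv2, hρ]
        · simp [dot, perp, hw]
    · refine ⟨(ρ, 0), by simp [Prod.ext_iff, hρ], ?_, ?_, ?_⟩
      · simp only [dot, perp, hv1, hv2] at h2 ⊢
        simp at h2 ⊢
        rcases h2 with h2 | h2
        · simp [h2]
        · exact absurd h2 hρ
      · simp [dot, hv1]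
      · simp [dot, perp, hw]
  · refine ⟨v + (0, ρ), hw, h3, ?_, ?_⟩
    · simp only [dot, Prod.fst_add, Prod.snd_add] at h1 ⊢
      simp; nlinarith
    · simp only [dot, perp, Prod.fst_add, Prod.snd_add]; ring
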